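/- Let R be an ordered field, V a proper convex subring with residue map st, and let S ⊆ Rⁿ be an m-simplex with vertices in Vⁿ. Then S is a V-simplex (i.e., the standard parts of the faces of S form a complex in kⁿ) if and only if there is an enumeration a₀,…,a_m of the vertices of S such that the sequence st(a₀),…,st(a_m) in kⁿ is simplicial. -/

import Mathlib

/-- The maximal ideal of a convex subring `V` of an ordered field. -/
def mSet {R : Type*} [Field R] [LinearOrder R] [IsStrictOrderedRing R] (V : Subring R) : Set R :=
  {x : R | x ∈ V ∧ (x = 0 ∨ x⁻¹ ∉ V)}

/-- `S` is a simplex: the convex hull of affinely independent points. -/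
def IsSimplexSet {K : Type*} [Field K] [LinearOrder K] [IsStrictOrderedRing K] {n : ℕ} (S : Set (Fin n → K)) : Prop :=
  ∃ (m : ℕ) (a : Fin (m + 1) → (Fin n → K)),
    AffineIndependent K a ∧ S = convexHull K (Set.range a)

/-- `F` is a face of the simplex `S`: the convex hull of a nonempty subset of its vertices. -/
def IsFaceOf {K : Type*} [Field K] [LinearOrder K] [IsStrictOrderedRing K] {n : ℕ} (F S : Set (Fin n → K)) : Prop :=
  ∃ (m : ℕ) (a : Fin (m + 1) → (Fin n → K)), AffineIndependent K a ∧
    S = convexHull K (Set.range a) ∧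
    ∃ T : Finset (Fin (m + 1)), T.Nonempty ∧ F = convexHull K (a '' ↑T)

/-- A complex: a finite collection of simplexes closed under faces such that any two
members meeting do so in a common face. -/
def IsComplexCol {K : Type*} [Field K] [LinearOrder K] [IsStrictOrderedRing K] {n : ℕ}
    (𝒦 : Set (Set (Fin n → K))) : Prop :=
  𝒦.Finite ∧ (∀ S ∈ 𝒦, IsSimplexSet S) ∧
    (∀ S ∈ 𝒦, ∀ F, IsFaceOf F S → F ∈ 𝒦) ∧
    (∀ S ∈ 𝒦, ∀ S' ∈ 𝒦, (S ∩ S').Nonempty →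
      IsFaceOf (S ∩ S') S ∧ IsFaceOf (S ∩ S') S')

def IsSimplicialWith {K : Type*} [Field K] [LinearOrder K] [IsStrictOrderedRing K] {n m k : ℕ}
    (a : Fin (m + 1) → (Fin n → K)) (ι : Fin (k + 1) → Fin (m + 1)) : Prop :=
  StrictMono ι ∧ ι 0 = 0 ∧ AffineIndependent K (a ∘ ι) ∧
    ∀ (κ : Fin (k + 1)) (i : Fin (m + 1)), ι κ ≤ i →
      (∀ κ' : Fin (k + 1), κ < κ' → i < ι κ') → a i = a (ι κ)

def IsSimplicialSeq {K : Type*} [Field K] [LinearOrder K] [IsStrictOrderedRing K] {n m : ℕ}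
    (a : Fin (m + 1) → (Fin n → K)) : Prop :=
  ∃ (k : ℕ) (ι : Fin (k + 1) → Fin (m + 1)), IsSimplicialWith a ι

/-- The standard part of a subset of `Rⁿ`: the image under the coordinatewise
residue map of its intersection with `Vⁿ`. -/
def stSet {R kk : Type*} [Field R] [LinearOrder R] [IsStrictOrderedRing R] [Field kk] [LinearOrder kk] [IsStrictOrderedRing kk]
    (V : Subring R) (st : R → kk) {n : ℕ} (X : Set (Fin n → R)) : Set (Fin n → kk) :=
  (fun x : Fin n → R => fun i => st (x i)) '' (X ∩ {x | ∀ i, x i ∈ V})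


section AuxLemmas


/-- Membership in the convex hull of a finite image, in terms of weights on the index set. -/
lemma mem_convexHull_finimage {K E ι : Type*} [Field K] [LinearOrder K] [IsStrictOrderedRing K] [AddCommGroup E]
    [Module K E] {T : Finset ι} (hT : T.Nonempty) (f : ι → E) (x : E) :
    x ∈ convexHull K (f '' ↑T) ↔
      ∃ w : ι → K, (∀ j ∈ T, 0 ≤ w j) ∧ ∑ j ∈ T, w j = 1 ∧ ∑ j ∈ T, w j • f j = x := by
  classical
  constructor
  · intro hx
    rw [← Finset.coe_image, Finset.mem_convexHull'] at hx
    obtain ⟨u, hu0, hu1, hux⟩ := hx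
    obtain ⟨j₀, hj₀⟩ := hT
    set rep : E → ι := fun y => if h : ∃ j, j ∈ T ∧ f j = y then h.choose else j₀ with hrep
    have hrepT : ∀ y ∈ T.image f, rep y ∈ T ∧ f (rep y) = y := by
      intro y hy
      rw [Finset.mem_image] at hy
      obtain ⟨j, hj, hfj⟩ := hy
      have h : ∃ j, j ∈ T ∧ f j = y := ⟨j, hj, hfj⟩
      simp only [hrep, dif_pos h]
      exact h.choose_spec
    refine ⟨fun j => ∑ y ∈ (T.image f).filter (fun y => rep y = j), u y, ?_, ?_, ?_⟩
    · intro j _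
      exact Finset.sum_nonneg fun y hy => hu0 y (Finset.mem_filter.mp hy).1
    · rw [Finset.sum_fiberwise_of_maps_to (fun y hy => (hrepT y hy).1)]
      exact hu1
    · have hcon : ∀ j ∈ T, (∑ y ∈ (T.image f).filter (fun y => rep y = j), u y) • f j
          = ∑ y ∈ (T.image f).filter (fun y => rep y = j), u y • y := by
        intro j _
        rw [Finset.sum_smul]
        refine Finset.sum_congr rfl fun y hy => ?_
        obtain ⟨hy1, hy2⟩ := Finset.mem_filter.mp hy
        rw [← hy2, (hrepT y hy1).2]
      rw [Finset.sum_congr rfl hcon,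
        Finset.sum_fiberwise_of_maps_to (fun y hy => (hrepT y hy).1)]
      exact hux
  · rintro ⟨w, hw0, hw1, rfl⟩
    have h := T.centerMass_mem_convexHull hw0 (by rw [hw1]; exact one_pos)
      (fun i hi => Set.mem_image_of_mem f hi)
    rwa [Finset.centerMass_eq_of_sum_1 _ _ hw1] at h

/-- A point of an affinely independent generating family that lies in the convex hull of a
subset `B` of the simplex must belong to `B`. -/
lemma mem_of_mem_convexHull_affInd {K E : Type*} [Field K] [LinearOrder K] [IsStrictOrderedRing K] [AddCommGroup E]
    [Module K E] {N : ℕ} {p : Fin (N + 1) → E} (hp : AffineIndependent K p) {B : Set E}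
    (hB : B ⊆ convexHull K (Set.range p)) {x : E} (hxp : x ∈ Set.range p)
    (hx : x ∈ convexHull K B) : x ∈ B := by
  classical
  obtain ⟨i, rfl⟩ := hxp
  have hrange : Set.range p = p '' ↑(Finset.univ : Finset (Fin (N + 1))) := by
    rw [Finset.coe_univ, Set.image_univ]
  rw [convexHull_eq_union_convexHull_finite_subsets] at hx
  rw [Set.mem_iUnion₂] at hx
  obtain ⟨t, ht, hxt⟩ := hx
  obtain ⟨u, hu0, hu1, hux⟩ := Finset.mem_convexHull'.mp hxt
  have hmem : ∀ y ∈ t, ∃ v : Fin (N + 1) → K,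
      (∀ k ∈ Finset.univ, 0 ≤ v k) ∧ ∑ k, v k = 1 ∧ ∑ k, v k • p k = y := by
    intro y hy
    have hyB := hB (ht hy)
    rw [hrange] at hyB
    exact (mem_convexHull_finimage ⟨i, Finset.mem_univ i⟩ p y).mp hyB
  choose! v hv0 hv1 hv2 using hmem
  set lam : Fin (N + 1) → K := fun r => ∑ y ∈ t, u y * v y r with hlam
  have hlam1 : ∑ r, lam r = 1 := by
    rw [hlam, Finset.sum_comm]
    calc ∑ y ∈ t, ∑ r, u y * v y r = ∑ y ∈ t, u y * ∑ r, v y r :=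
          Finset.sum_congr rfl fun y _ => (Finset.mul_sum _ _ _).symm
      _ = ∑ y ∈ t, u y := Finset.sum_congr rfl fun y hy => by rw [hv1 y hy, mul_one]
      _ = 1 := hu1
  have hlamx : ∑ r, lam r • p r = p i := by
    rw [hlam]
    calc ∑ r, (∑ y ∈ t, u y * v y r) • p r
        = ∑ r, ∑ y ∈ t, (u y * v y r) • p r :=
          Finset.sum_congr rfl fun r _ => Finset.sum_smul
      _ = ∑ y ∈ t, ∑ r, (u y * v y r) • p r := Finset.sum_comm
      _ = ∑ y ∈ t, u y • y := by
          refine Finset.sum_congr rfl fun y hy => ?_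
          calc ∑ r, (u y * v y r) • p r = ∑ r, u y • (v y r • p r) :=
                Finset.sum_congr rfl fun r _ => mul_smul _ _ _
            _ = u y • ∑ r, v y r • p r := Finset.smul_sum.symm
            _ = u y • y := by rw [hv2 y hy]
      _ = p i := hux
  have hzero : ∀ r ∈ Finset.univ, lam r - (if r = i then 1 else 0) = 0 := by
    apply affineIndependent_iff.mp hp Finset.univ
    · rw [Finset.sum_sub_distrib, hlam1, Finset.sum_ite_eq' Finset.univ i (fun _ => (1 : K)),
        if_pos (Finset.mem_univ i), sub_self]
    · have : ∀ r ∈ Finset.univ, (lam r - if r = i then 1 else 0) • p r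
          = lam r • p r - (if r = i then (1:K) else 0) • p r := fun r _ => by module
      have h2 : ∑ r, (if r = i then (1:K) else 0) • p r = p i := by
        rw [Finset.sum_eq_single_of_mem i (Finset.mem_univ i)]
        · rw [if_pos rfl, one_smul]
        · intro r _ hr
          rw [if_neg hr, zero_smul]
      rw [Finset.sum_congr rfl this, Finset.sum_sub_distrib, hlamx, h2, sub_self]
  have hlami : lam i = 1 := by
    have := hzero i (Finset.mem_univ i)
    rw [if_pos rfl] at this
    linarith
  have hterm0 : ∀ y ∈ t, u y * (1 - v y i) = 0 := by
    apply (Finset.sum_eq_zero_iff_of_nonneg ?_).mp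
    · calc ∑ y ∈ t, u y * (1 - v y i) = ∑ y ∈ t, (u y - u y * v y i) :=
            Finset.sum_congr rfl fun y _ => by ring
        _ = (∑ y ∈ t, u y) - ∑ y ∈ t, u y * v y i := Finset.sum_sub_distrib _ _
        _ = 1 - lam i := by rw [hu1, hlam]
        _ = 0 := by rw [hlami, sub_self]
    · intro y hy
      have hvle : v y i ≤ 1 := by
        rw [← hv1 y hy]
        exact Finset.single_le_sum (fun r _ => hv0 y hy r (Finset.mem_univ r)) (Finset.mem_univ i)
      exact mul_nonneg (hu0 y hy) (by linarith)
  obtain ⟨y₀, hy₀t, hy₀ne⟩ : ∃ y ∈ t, u y ≠ 0 :=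
    Finset.exists_ne_zero_of_sum_ne_zero (by rw [hu1]; exact one_ne_zero)
  have hvy₀i : v y₀ i = 1 := by
    rcases mul_eq_zero.mp (hterm0 y₀ hy₀t) with h | h
    · exact absurd h hy₀ne
    · linarith
  have hvy₀r : ∀ r, r ≠ i → v y₀ r = 0 := by
    have hsum : ∑ r ∈ Finset.univ.erase i, v y₀ r = 0 := by
      have := Finset.add_sum_erase Finset.univ (v y₀) (Finset.mem_univ i)
      rw [hv1 y₀ hy₀t, hvy₀i] at this
      linarith
    intro r hr
    exact (Finset.sum_eq_zero_iff_of_nonneg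
      (fun s hs => hv0 y₀ hy₀t s (Finset.mem_univ s))).mp hsum r
      (Finset.mem_erase.mpr ⟨hr, Finset.mem_univ r⟩)
  have : p i = y₀ := by
    rw [← hv2 y₀ hy₀t, Finset.sum_eq_single_of_mem i (Finset.mem_univ i)]
    · rw [hvy₀i, one_smul]
    · intro r _ hr
      rw [hvy₀r r hr, zero_smul]
  rw [this]
  exact ht hy₀t

/-- Enumerate the image of a finite index set by an affinely independent family. -/
lemma exists_enum {K E ι : Type*} [Field K] [LinearOrder K] [IsStrictOrderedRing K] [AddCommGroup E] [Module K E]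
    [LinearOrder ι] {c : ι → E} (hc : AffineIndependent K c) (A : Finset ι) (hA : A.Nonempty) :
    ∃ (s : ℕ) (e : Fin (s + 1) → E), AffineIndependent K e ∧ Set.range e = c '' ↑A := by
  have hcard : A.card = (A.card - 1) + 1 := (Nat.succ_pred_eq_of_pos hA.card_pos).symm
  refine ⟨A.card - 1, c ∘ A.orderEmbOfFin hcard,
    hc.comp_embedding (A.orderEmbOfFin hcard).toEmbedding, ?_⟩
  rw [Set.range_comp, Finset.range_orderEmbOfFin]

lemma isFaceOf_of_hull {K : Type*} [Field K] [LinearOrder K] [IsStrictOrderedRing K] {n kd : ℕ}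
    {c : Fin (kd + 1) → (Fin n → K)} (hc : AffineIndependent K c)
    {A B : Finset (Fin (kd + 1))} (hBA : B ⊆ A) (hB : B.Nonempty)
    {S F : Set (Fin n → K)} (hS : S = convexHull K (c '' ↑A))
    (hF : F = convexHull K (c '' ↑B)) : IsFaceOf F S := by
  classical
  obtain ⟨s, e, he, hre⟩ := exists_enum hc A (hB.mono hBA)
  refine ⟨s, e, he, by rw [hS, hre], Finset.univ.filter (fun i => e i ∈ c '' ↑B), ?_, ?_⟩
  · obtain ⟨κ, hκ⟩ := hB
    have hmem : c κ ∈ Set.range e := by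
      rw [hre]; exact Set.mem_image_of_mem c (hBA hκ)
    obtain ⟨i, hi⟩ := hmem
    exact ⟨i, Finset.mem_filter.mpr ⟨Finset.mem_univ i,
      by rw [hi]; exact Set.mem_image_of_mem c hκ⟩⟩
  · rw [hF]
    congr 1
    ext x
    constructor
    · rintro ⟨κ, hκ, rfl⟩
      have hmem : c κ ∈ Set.range e := by
        rw [hre]; exact Set.mem_image_of_mem c (hBA hκ)
      obtain ⟨i, hi⟩ := hmem
      exact ⟨i, Finset.mem_coe.mpr (Finset.mem_filter.mpr ⟨Finset.mem_univ i,
        by rw [hi]; exact Set.mem_image_of_mem c hκ⟩), hi⟩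
    · rintro ⟨i, hi, rfl⟩
      exact (Finset.mem_filter.mp (Finset.mem_coe.mp hi)).2

section ST
variable {R kk : Type*} [Field R] [LinearOrder R] [IsStrictOrderedRing R] [Field kk] [LinearOrder kk] [IsStrictOrderedRing kk]
  {V : Subring R} {st : R → kk}

lemma st_zero (hadd : ∀ x ∈ V, ∀ y ∈ V, st (x + y) = st x + st y) : st 0 = 0 := by
  have h := hadd 0 V.zero_mem 0 V.zero_mem
  rw [add_zero] at h
  linarith

lemma st_sum (hadd : ∀ x ∈ V, ∀ y ∈ V, st (x + y) = st x + st y)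
    {ι : Type*} (s : Finset ι) (g : ι → R) (hg : ∀ j ∈ s, g j ∈ V) :
    st (∑ j ∈ s, g j) = ∑ j ∈ s, st (g j) := by
  classical
  induction s using Finset.induction_on with
  | empty => simpa using st_zero hadd
  | insert a s' hnotmem ih =>
    rw [Finset.sum_insert hnotmem, Finset.sum_insert hnotmem,
      hadd _ (hg a (Finset.mem_insert_self a s')) _
        (sum_mem fun j hj => hg j (Finset.mem_insert_of_mem hj)),
      ih fun j hj => hg j (Finset.mem_insert_of_mem hj)]

lemma st_nonneg (hadd : ∀ x ∈ V, ∀ y ∈ V, st (x + y) = st x + st y)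
    (hmono : ∀ x ∈ V, ∀ y ∈ V, x ≤ y → st x ≤ st y)
    {x : R} (hx : x ∈ V) (h0 : 0 ≤ x) : 0 ≤ st x := by
  have := hmono 0 V.zero_mem x hx h0
  rwa [st_zero hadd] at this

lemma st_inv (hconv : ∀ x y : R, |x| ≤ |y| → y ∈ V → x ∈ V)
    (hker : ∀ x ∈ V, ∀ y ∈ V, (st x = st y ↔ x - y ∈ mSet V))
    (hadd : ∀ x ∈ V, ∀ y ∈ V, st (x + y) = st x + st y)
    (hmul : ∀ x ∈ V, ∀ y ∈ V, st (x * y) = st x * st y)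
    (hone : st 1 = 1)
    {s : R} (hs : s ∈ V) (h1 : st s = 1) : s ≠ 0 ∧ s⁻¹ ∈ V ∧ st s⁻¹ = 1 := by
  have h2V : (2 : R) ∈ V := by
    have := V.add_mem V.one_mem V.one_mem
    rwa [one_add_one_eq_two] at this
  have hs0 : s ≠ 0 := by
    rintro rfl
    rw [st_zero hadd] at h1
    exact zero_ne_one h1
  by_cases hs1 : s = 1
  · subst hs1
    exact ⟨one_ne_zero, by simpa using V.one_mem, by simpa using hone⟩
  · have hm : s - 1 ∈ mSet V := (hker s hs 1 V.one_mem).mp (by rw [h1, hone])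
    have hinv : (s - 1)⁻¹ ∉ V := by
      rcases hm.2 with h | h
      · exact absurd (sub_eq_zero.mp h) hs1
      · exact h
    have hne : s - 1 ≠ 0 := sub_ne_zero.mpr hs1
    have habs : ¬ |(s - 1)⁻¹| ≤ |(2 : R)| := fun h => hinv (hconv _ _ h h2V)
    push_neg at habs
    have h2lt : (2 : R) < |s - 1|⁻¹ := by
      rw [← abs_inv]
      calc (2:R) ≤ |(2:R)| := le_abs_self 2
        _ < |(s-1)⁻¹| := habs
    have hpos : 0 < |s - 1| := abs_pos.mpr hne
    have h3 : |s - 1| < 2⁻¹ := by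
      have hmul1 : |s - 1| * |s - 1|⁻¹ = 1 := mul_inv_cancel₀ hpos.ne'
      nlinarith [hpos, h2lt, hmul1]
    have hshalf : 2⁻¹ < s := by
      have := abs_lt.mp h3
      have h1 : -(2⁻¹ : R) < s - 1 := this.1
      linarith [show ((2:R)⁻¹) < 1 by norm_num]
    have hspos : 0 < s := lt_trans (by norm_num) hshalf
    have hsinv_le : s⁻¹ < 2 := by
      have hmul1 : s * s⁻¹ = 1 := mul_inv_cancel₀ hs0
      nlinarith [hspos, hshalf, hmul1]
    have hsinvV : s⁻¹ ∈ V := by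
      refine hconv _ 2 ?_ h2V
      rw [abs_of_pos (inv_pos.mpr hspos), abs_of_pos (by norm_num : (0:R) < 2)]
      exact hsinv_le.le
    refine ⟨hs0, hsinvV, ?_⟩
    have hh := hmul s hs s⁻¹ hsinvV
    rw [mul_inv_cancel₀ hs0, hone, h1, one_mul] at hh
    exact hh.symm

lemma st_lift (hconv : ∀ x y : R, |x| ≤ |y| → y ∈ V → x ∈ V)
    (hadd : ∀ x ∈ V, ∀ y ∈ V, st (x + y) = st x + st y)
    (hmono : ∀ x ∈ V, ∀ y ∈ V, x ≤ y → st x ≤ st y)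
    (hsurj : ∀ c : kk, ∃ x ∈ V, st x = c)
    {cv : kk} (hc : 0 ≤ cv) : ∃ t, t ∈ V ∧ 0 ≤ t ∧ st t = cv := by
  obtain ⟨t, htV, hst⟩ := hsurj cv
  by_cases h0 : 0 ≤ t
  · exact ⟨t, htV, h0, hst⟩
  · push_neg at h0
    refine ⟨0, V.zero_mem, le_refl 0, ?_⟩
    rw [st_zero hadd]
    have : st t ≤ 0 := by
      have := hmono t htV 0 V.zero_mem h0.le
      rwa [st_zero hadd] at this
    have : cv ≤ 0 := hst ▸ this
    linarith
end ST

section ST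
variable {R kk : Type*} [Field R] [LinearOrder R] [IsStrictOrderedRing R] [Field kk] [LinearOrder kk] [IsStrictOrderedRing kk]
  {V : Subring R} {st : R → kk}
lemma stSet_convexHull
    (hconv : ∀ x y : R, |x| ≤ |y| → y ∈ V → x ∈ V)
    (hker : ∀ x ∈ V, ∀ y ∈ V, (st x = st y ↔ x - y ∈ mSet V))
    (hadd : ∀ x ∈ V, ∀ y ∈ V, st (x + y) = st x + st y)
    (hmul : ∀ x ∈ V, ∀ y ∈ V, st (x * y) = st x * st y)
    (hone : st 1 = 1)
    (hmono : ∀ x ∈ V, ∀ y ∈ V, x ≤ y → st x ≤ st y)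
    (hsurj : ∀ c : kk, ∃ x ∈ V, st x = c)
    {n m : ℕ} (a : Fin (m + 1) → (Fin n → R)) (haV : ∀ j i, a j i ∈ V)
    (T : Finset (Fin (m + 1))) (hT : T.Nonempty) :
    stSet V st (convexHull R (a '' ↑T))
      = convexHull kk ((fun j => fun i => st (a j i)) '' ↑T) := by
  classical
  set b : Fin (m + 1) → Fin n → kk := fun j => fun i => st (a j i) with hb
  have hVset : convexHull R (a '' ↑T) ⊆ {x : Fin n → R | ∀ i, x i ∈ V} := by
    apply convexHull_min
    · rintro x ⟨j, _, rfl⟩ i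
      exact haV j i
    · intro x hx y hy p q hp hq hpq i
      have hpV : p ∈ V := hconv p 1 (by rw [abs_of_nonneg hp, abs_one]; linarith) V.one_mem
      have hqV : q ∈ V := hconv q 1 (by rw [abs_of_nonneg hq, abs_one]; linarith) V.one_mem
      exact V.add_mem (V.mul_mem hpV (hx i)) (V.mul_mem hqV (hy i))
  rw [stSet, Set.inter_eq_self_of_subset_left hVset]
  ext y
  constructor
  · rintro ⟨x, hx, rfl⟩
    obtain ⟨w, hw0, hw1, hwx⟩ := (mem_convexHull_finimage hT a x).mp hx
    have hwV : ∀ j ∈ T, w j ∈ V := by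
      intro j hj
      refine hconv _ 1 ?_ V.one_mem
      rw [abs_one, abs_of_nonneg (hw0 j hj)]
      rw [← hw1]
      exact Finset.single_le_sum hw0 hj
    refine (mem_convexHull_finimage hT b _).mpr ⟨fun j => st (w j), ?_, ?_, ?_⟩
    · exact fun j hj => st_nonneg hadd hmono (hwV j hj) (hw0 j hj)
    · rw [← st_sum hadd T w hwV, hw1, hone]
    · funext i
      show (∑ j ∈ T, st (w j) • b j) i = st (x i)
      rw [Finset.sum_apply]
      have hxi : x i = ∑ j ∈ T, w j * a j i := by
        rw [← hwx, Finset.sum_apply]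
        rfl
      rw [hxi, st_sum hadd T _ (fun j hj => V.mul_mem (hwV j hj) (haV j i))]
      refine Finset.sum_congr rfl fun j hj => ?_
      rw [hmul _ (hwV j hj) _ (haV j i)]
      rfl
  · intro hy
    obtain ⟨u, hu0, hu1, huy⟩ := (mem_convexHull_finimage hT b y).mp hy
    have hlift : ∀ j ∈ T, ∃ t, t ∈ V ∧ 0 ≤ t ∧ st t = u j :=
      fun j hj => st_lift hconv hadd hmono hsurj (hu0 j hj)
    choose! t ht using hlift
    set s := ∑ j ∈ T, t j with hsdef
    have hsV : s ∈ V := sum_mem fun j hj => (ht j hj).1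
    have hs1 : st s = 1 := by
      rw [hsdef, st_sum hadd T t (fun j hj => (ht j hj).1)]
      rw [Finset.sum_congr rfl (fun j hj => (ht j hj).2.2)]
      exact hu1
    obtain ⟨hs0, hsiV, hsi1⟩ := st_inv hconv hker hadd hmul hone hsV hs1
    have hsnn : 0 ≤ s := Finset.sum_nonneg fun j hj => (ht j hj).2.1
    refine ⟨∑ j ∈ T, (t j * s⁻¹) • a j, ?_, ?_⟩
    · refine (mem_convexHull_finimage hT a _).mpr ⟨fun j => t j * s⁻¹,
        fun j hj => mul_nonneg (ht j hj).2.1 (inv_nonneg.mpr hsnn), ?_, rfl⟩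
      rw [← Finset.sum_mul, ← hsdef, mul_inv_cancel₀ hs0]
    · funext i
      show st ((∑ j ∈ T, (t j * s⁻¹) • a j) i) = y i
      rw [Finset.sum_apply]
      simp only [Pi.smul_apply, smul_eq_mul]
      rw [st_sum hadd T _ (fun j hj => V.mul_mem (V.mul_mem (ht j hj).1 hsiV) (haV j i))]
      calc ∑ j ∈ T, st (t j * s⁻¹ * a j i) = ∑ j ∈ T, u j * st (a j i) := by
            refine Finset.sum_congr rfl fun j hj => ?_
            rw [hmul _ (V.mul_mem (ht j hj).1 hsiV) _ (haV j i),
              hmul _ (ht j hj).1 _ hsiV, (ht j hj).2.2, hsi1, mul_one]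
        _ = y i := by rw [← huy, Finset.sum_apply]; rfl
end ST

set_option maxHeartbeats 2000000 in
lemma exists_perm_simplicial {K : Type*} [Field K] [LinearOrder K] [IsStrictOrderedRing K] {n m k : ℕ}
    {b : Fin (m + 1) → (Fin n → K)} {c : Fin (k + 1) → (Fin n → K)}
    (hc : AffineIndependent K c) (hrange : Set.range c = Set.range b) :
    ∃ σ : Equiv.Perm (Fin (m + 1)), IsSimplicialSeq (fun j => b (σ j)) := by
  classical
  have hcinj : Function.Injective c := hc.injective
  have hf : ∀ j, ∃ κ, c κ = b j := by
    intro j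
    have hh : b j ∈ Set.range c := hrange ▸ Set.mem_range_self j
    exact hh
  choose f hfc using hf
  obtain ⟨σ, hgmono⟩ : ∃ σ : Equiv.Perm (Fin (m + 1)), Monotone (f ∘ σ) :=
    ⟨Tuple.sort f, Tuple.monotone_sort f⟩
  set g : Fin (m + 1) → Fin (k + 1) := f ∘ σ with hg
  have hgsurj : Function.Surjective g := by
    intro κ
    have hh : c κ ∈ Set.range b := hrange ▸ Set.mem_range_self κ
    obtain ⟨j, hj⟩ := hh
    refine ⟨σ.symm j, ?_⟩
    have hcc : c (f j) = c κ := by rw [hfc j, hj]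
    have hfj : f j = κ := hcinj hcc
    simp only [hg, Function.comp_apply, Equiv.apply_symm_apply]
    exact hfj
  have hfib : ∀ κ, (Finset.univ.filter (fun i => g i = κ)).Nonempty := by
    intro κ
    obtain ⟨i, hi⟩ := hgsurj κ
    exact ⟨i, Finset.mem_filter.mpr ⟨Finset.mem_univ i, hi⟩⟩
  set ι : Fin (k + 1) → Fin (m + 1) :=
    fun κ => (Finset.univ.filter (fun i => g i = κ)).min' (hfib κ) with hι
  have hgι : ∀ κ, g (ι κ) = κ := fun κ =>
    (Finset.mem_filter.mp ((Finset.univ.filter (fun i => g i = κ)).min'_mem (hfib κ))).2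
  have hιle : ∀ i, ι (g i) ≤ i := fun i =>
    Finset.min'_le (Finset.univ.filter (fun j => g j = g i)) i
      (Finset.mem_filter.mpr ⟨Finset.mem_univ i, rfl⟩)
  refine ⟨σ, k, ι, ?_, ?_, ?_, ?_⟩
  · intro κ κ' hlt
    rcases lt_or_ge (ι κ) (ι κ') with h | h
    · exact h
    · exfalso
      have hmono := hgmono h
      rw [hgι, hgι] at hmono
      exact absurd (lt_of_lt_of_le hlt hmono) (lt_irrefl κ)
  · apply le_antisymm _ (Fin.zero_le _)
    have hg0 : g 0 = 0 := by
      apply le_antisymm _ (Fin.zero_le _)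
      obtain ⟨i, hi⟩ := hgsurj 0
      calc g 0 ≤ g i := hgmono (Fin.zero_le i)
        _ = 0 := hi
    calc ι 0 = ι (g 0) := by rw [hg0]
      _ ≤ 0 := hιle 0
  · have hcomp : (fun j => b (σ j)) ∘ ι = c := by
      funext κ
      show b (σ (ι κ)) = c κ
      rw [← hfc (σ (ι κ))]
      exact congrArg c (hgι κ)
    rw [hcomp]
    exact hc
  · intro κ i hle hlt
    have h1 : κ ≤ g i := by
      calc κ = g (ι κ) := (hgι κ).symm
        _ ≤ g i := hgmono hle
    have h2 : g i ≤ κ := by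
      by_contra hgt
      push_neg at hgt
      exact absurd (lt_of_le_of_lt (hιle i) (hlt (g i) hgt)) (lt_irrefl _)
    have hgi : g i = κ := le_antisymm h2 h1
    show b (σ i) = b (σ (ι κ))
    rw [← hfc (σ i), ← hfc (σ (ι κ))]
    have hfeq : f (σ i) = f (σ (ι κ)) := by
      show g i = g (ι κ)
      rw [hgi, hgι]
    rw [hfeq]

lemma range_eq_of_simplicial {K : Type*} [Field K] [LinearOrder K] [IsStrictOrderedRing K] {n m k : ℕ}
    {b : Fin (m + 1) → (Fin n → K)} {σ : Equiv.Perm (Fin (m + 1))}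
    {ι : Fin (k + 1) → Fin (m + 1)} (h0 : ι 0 = 0)
    (hblock : ∀ (κ : Fin (k + 1)) (i : Fin (m + 1)), ι κ ≤ i →
      (∀ κ' : Fin (k + 1), κ < κ' → i < ι κ') → b (σ i) = b (σ (ι κ))) :
    Set.range ((fun j => b (σ j)) ∘ ι) = Set.range b := by
  classical
  apply Set.Subset.antisymm
  · rintro _ ⟨κ, rfl⟩
    exact Set.mem_range_self _
  · rintro _ ⟨j, rfl⟩
    set i := σ.symm j with hi
    have hbj : b j = b (σ i) := by rw [hi, Equiv.apply_symm_apply]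
    set Kle := Finset.univ.filter (fun κ => ι κ ≤ i) with hK
    have hne : Kle.Nonempty :=
      ⟨0, Finset.mem_filter.mpr ⟨Finset.mem_univ 0, by rw [h0]; exact Fin.zero_le i⟩⟩
    set κ := Kle.max' hne with hκ
    have hκle : ι κ ≤ i := (Finset.mem_filter.mp (Kle.max'_mem hne)).2
    have hmax : ∀ κ', κ < κ' → i < ι κ' := by
      intro κ' hκ'
      by_contra hle
      push_neg at hle
      have hmem : κ' ∈ Kle := Finset.mem_filter.mpr ⟨Finset.mem_univ _, hle⟩
      exact absurd (Kle.le_max' κ' hmem) (not_le.mpr hκ')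
    have hb := hblock κ i hκle hmax
    exact ⟨κ, by simp only [Function.comp_apply]; rw [hbj, hb]⟩

lemma isComplexCol_of_affInd {K : Type*} [Field K] [LinearOrder K] [IsStrictOrderedRing K] {n m k : ℕ}
    {b : Fin (m + 1) → (Fin n → K)} {c : Fin (k + 1) → (Fin n → K)}
    (hc : AffineIndependent K c) (hrange : Set.range c = Set.range b) :
    IsComplexCol {Z : Set (Fin n → K) | ∃ T : Finset (Fin (m + 1)), T.Nonempty ∧
      Z = convexHull K (b '' ↑T)} := by
  classical
  have key : ∀ T : Finset (Fin (m + 1)), T.Nonempty →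
      ∃ A : Finset (Fin (k + 1)), A.Nonempty ∧ c '' ↑A = b '' ↑T := by
    intro T hT
    refine ⟨Finset.univ.filter (fun κ => c κ ∈ b '' ↑T), ?_, ?_⟩
    · obtain ⟨j, hj⟩ := hT
      have hbj : b j ∈ Set.range c := hrange ▸ Set.mem_range_self j
      obtain ⟨κ, hκ⟩ := hbj
      exact ⟨κ, Finset.mem_filter.mpr ⟨Finset.mem_univ κ,
        by rw [hκ]; exact Set.mem_image_of_mem b (Finset.mem_coe.mpr hj)⟩⟩
    · ext x
      constructor
      · rintro ⟨κ, hκ, rfl⟩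
        exact (Finset.mem_filter.mp (Finset.mem_coe.mp hκ)).2
      · intro hx
        have hxc : x ∈ Set.range c := by
          rw [hrange]
          obtain ⟨j, _, rfl⟩ := hx
          exact Set.mem_range_self j
        obtain ⟨κ, rfl⟩ := hxc
        exact ⟨κ, Finset.mem_coe.mpr (Finset.mem_filter.mpr ⟨Finset.mem_univ κ, hx⟩), rfl⟩
  have key2 : ∀ A : Finset (Fin (k + 1)), A.Nonempty →
      ∃ T : Finset (Fin (m + 1)), T.Nonempty ∧ b '' ↑T = c '' ↑A := by
    intro A hA
    refine ⟨Finset.univ.filter (fun j => b j ∈ c '' ↑A), ?_, ?_⟩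
    · obtain ⟨κ, hκ⟩ := hA
      have hcκ : c κ ∈ Set.range b := by rw [← hrange]; exact Set.mem_range_self κ
      obtain ⟨j, hj⟩ := hcκ
      exact ⟨j, Finset.mem_filter.mpr ⟨Finset.mem_univ j,
        by rw [hj]; exact Set.mem_image_of_mem c (Finset.mem_coe.mpr hκ)⟩⟩
    · ext x
      constructor
      · rintro ⟨j, hj, rfl⟩
        exact (Finset.mem_filter.mp (Finset.mem_coe.mp hj)).2
      · intro hx
        have hxb : x ∈ Set.range b := by
          rw [← hrange]
          obtain ⟨κ, _, rfl⟩ := hx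
          exact Set.mem_range_self κ
        obtain ⟨j, rfl⟩ := hxb
        exact ⟨j, Finset.mem_coe.mpr (Finset.mem_filter.mpr ⟨Finset.mem_univ j, hx⟩), rfl⟩
  have hKeq : {Z : Set (Fin n → K) | ∃ T : Finset (Fin (m + 1)), T.Nonempty ∧
        Z = convexHull K (b '' ↑T)}
      = {Z : Set (Fin n → K) | ∃ A : Finset (Fin (k + 1)), A.Nonempty ∧
        Z = convexHull K (c '' ↑A)} := by
    ext Z
    simp only [Set.mem_setOf_eq]
    constructor
    · rintro ⟨T, hT, rfl⟩
      obtain ⟨A, hA, hAT⟩ := key T hT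
      exact ⟨A, hA, by rw [hAT]⟩
    · rintro ⟨A, hA, rfl⟩
      obtain ⟨T, hT, hTA⟩ := key2 A hA
      exact ⟨T, hT, by rw [hTA]⟩
  rw [hKeq]
  have hinter : ∀ A₁ A₂ : Finset (Fin (k + 1)),
      convexHull K (c '' ↑A₁) ∩ convexHull K (c '' ↑A₂) = convexHull K (c '' ↑(A₁ ∩ A₂)) := by
    intro A₁ A₂
    have h0 : ((Finset.univ.image c : Finset (Fin n → K)) : Set (Fin n → K)) = Set.range c := by
      rw [Finset.coe_image, Finset.coe_univ, Set.image_univ]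
    have hs : AffineIndependent K ((↑) : ↑(Finset.univ.image c) → (Fin n → K)) :=
      hc.range.mono h0.subset
    have h := hs.convexHull_inter
      (t₁ := A₁.image c) (t₂ := A₂.image c)
      (Finset.image_subset_image (Finset.subset_univ A₁))
      (Finset.image_subset_image (Finset.subset_univ A₂))
    simp only [Finset.coe_image] at h
    rw [← Set.image_inter hc.injective, ← Finset.coe_inter] at h
    exact h.symm
  refine ⟨?_, ?_, ?_, ?_⟩
  · apply Set.Finite.subset
      (Set.finite_range (fun A : Finset (Fin (k + 1)) => convexHull K (c '' ↑A)))
    rintro Z ⟨A, _, rfl⟩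
    exact ⟨A, rfl⟩
  · rintro Z ⟨A, hA, rfl⟩
    obtain ⟨s, e, he, hre⟩ := exists_enum hc A hA
    exact ⟨s, e, he, by rw [hre]⟩
  · rintro S ⟨A, hA, rfl⟩ F ⟨m', a', haff, hS, T', hT', hF⟩
    have hsub : Set.range a' ⊆ c '' ↑A := by
      rintro x ⟨i, rfl⟩
      refine mem_of_mem_convexHull_affInd haff ?_ (Set.mem_range_self i) ?_
      · rw [← hS]
        exact subset_convexHull K _
      · have h1 : a' i ∈ convexHull K (Set.range a') :=
          subset_convexHull K _ (Set.mem_range_self i)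
        rwa [← hS] at h1
    set A' := Finset.univ.filter (fun κ => c κ ∈ a' '' ↑T') with hA'def
    have himg : c '' ↑A' = a' '' ↑T' := by
      ext x
      constructor
      · rintro ⟨κ, hκ, rfl⟩
        exact (Finset.mem_filter.mp (Finset.mem_coe.mp hκ)).2
      · intro hx
        have hxr : x ∈ Set.range a' := by
          obtain ⟨i, _, rfl⟩ := hx
          exact Set.mem_range_self i
        obtain ⟨κ, _, rfl⟩ := hsub hxr
        exact ⟨κ, Finset.mem_coe.mpr (Finset.mem_filter.mpr ⟨Finset.mem_univ κ, hx⟩), rfl⟩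
    have hA'ne : A'.Nonempty := by
      obtain ⟨t, ht⟩ := hT'
      have hmem : a' t ∈ c '' ↑A' := by
        rw [himg]
        exact Set.mem_image_of_mem a' (Finset.mem_coe.mpr ht)
      obtain ⟨κ, hκ, -⟩ := hmem
      exact ⟨κ, Finset.mem_coe.mp hκ⟩
    exact ⟨A', hA'ne, by rw [hF, himg]⟩
  · rintro S ⟨A₁, hA₁, rfl⟩ S' ⟨A₂, hA₂, rfl⟩ hne
    have hintr := hinter A₁ A₂
    have hABne : (A₁ ∩ A₂).Nonempty := by
      by_contra hemp
      rw [Finset.not_nonempty_iff_eq_empty] at hemp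
      rw [hintr, hemp] at hne
      simp only [Finset.coe_empty, Set.image_empty, convexHull_empty] at hne
      exact Set.not_nonempty_empty hne
    constructor
    · exact isFaceOf_of_hull hc Finset.inter_subset_left hABne rfl hintr
    · exact isFaceOf_of_hull hc Finset.inter_subset_right hABne rfl hintr

lemma affInd_of_complex {K : Type*} [Field K] [LinearOrder K] [IsStrictOrderedRing K] {n m : ℕ}
    {b : Fin (m + 1) → (Fin n → K)}
    (hcomplex : IsComplexCol {Z : Set (Fin n → K) | ∃ T : Finset (Fin (m + 1)), T.Nonempty ∧
      Z = convexHull K (b '' ↑T)}) :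
    ∃ (k : ℕ) (c : Fin (k + 1) → (Fin n → K)),
      AffineIndependent K c ∧ Set.range c = Set.range b := by
  classical
  set Rb := Finset.univ.image b with hRb
  have hRbne : Rb.Nonempty := ⟨b 0, Finset.mem_image.mpr ⟨0, Finset.mem_univ 0, rfl⟩⟩
  have hcard : Rb.card = (Rb.card - 1) + 1 := (Nat.succ_pred_eq_of_pos hRbne.card_pos).symm
  set c : Fin (Rb.card - 1 + 1) → (Fin n → K) :=
    fun i => ↑(Rb.equivFin.symm (Fin.cast hcard.symm i)) with hcdef
  have hcinj : Function.Injective c := by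
    intro i₁ i₂ h
    have h1 := Subtype.val_injective h
    have h2 := Rb.equivFin.symm.injective h1
    exact Fin.cast_injective _ h2
  have hrange : Set.range c = Set.range b := by
    have h1 : Set.range c = ↑Rb := by
      ext x
      constructor
      · rintro ⟨i, rfl⟩
        exact (Rb.equivFin.symm (Fin.cast hcard.symm i)).2
      · intro hx
        refine ⟨Fin.cast hcard (Rb.equivFin ⟨x, hx⟩), ?_⟩
        simp [hcdef]
    rw [h1, hRb, Finset.coe_image, Finset.coe_univ, Set.image_univ]
  refine ⟨Rb.card - 1, c, ?_, hrange⟩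
  by_contra hnot
  obtain ⟨I, p, hpI, hpIc⟩ := Convex.radon_partition hnot
  have keyS : ∀ A : Set (Fin (Rb.card - 1 + 1)), A.Nonempty →
      ∃ T : Finset (Fin (m + 1)), T.Nonempty ∧ b '' ↑T = c '' A := by
    intro A hA
    refine ⟨Finset.univ.filter (fun j => b j ∈ c '' A), ?_, ?_⟩
    · obtain ⟨κ, hκ⟩ := hA
      have hcκ : c κ ∈ Set.range b := by rw [← hrange]; exact Set.mem_range_self κ
      obtain ⟨j, hj⟩ := hcκ
      exact ⟨j, Finset.mem_filter.mpr ⟨Finset.mem_univ j,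
        by rw [hj]; exact Set.mem_image_of_mem c hκ⟩⟩
    · ext x
      constructor
      · rintro ⟨j, hj, rfl⟩
        exact (Finset.mem_filter.mp (Finset.mem_coe.mp hj)).2
      · intro hx
        have hxb : x ∈ Set.range b := by
          rw [← hrange]
          obtain ⟨κ, _, rfl⟩ := hx
          exact Set.mem_range_self κ
        obtain ⟨j, rfl⟩ := hxb
        exact ⟨j, Finset.mem_coe.mpr (Finset.mem_filter.mpr ⟨Finset.mem_univ j, hx⟩), rfl⟩
  have hIne : I.Nonempty := by
    by_contra h
    rw [Set.not_nonempty_iff_eq_empty] at h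
    rw [h] at hpI
    simp only [Set.image_empty, convexHull_empty] at hpI
    exact hpI
  have hIcne : Iᶜ.Nonempty := by
    by_contra h
    rw [Set.not_nonempty_iff_eq_empty] at h
    rw [h] at hpIc
    simp only [Set.image_empty, convexHull_empty] at hpIc
    exact hpIc
  obtain ⟨T₁, hT₁, hbT₁⟩ := keyS I hIne
  obtain ⟨T₂, hT₂, hbT₂⟩ := keyS Iᶜ hIcne
  have hX : convexHull K (c '' I) ∈ {Z : Set (Fin n → K) | ∃ T : Finset (Fin (m + 1)),
      T.Nonempty ∧ Z = convexHull K (b '' ↑T)} := ⟨T₁, hT₁, by rw [hbT₁]⟩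
  have hY : convexHull K (c '' Iᶜ) ∈ {Z : Set (Fin n → K) | ∃ T : Finset (Fin (m + 1)),
      T.Nonempty ∧ Z = convexHull K (b '' ↑T)} := ⟨T₂, hT₂, by rw [hbT₂]⟩
  obtain ⟨hface, -⟩ := hcomplex.2.2.2 _ hX _ hY ⟨p, hpI, hpIc⟩
  obtain ⟨m', a', haff, hS, T', hT', hF⟩ := hface
  obtain ⟨t, ht⟩ := hT'
  have hvXY : a' t ∈ convexHull K (c '' I) ∩ convexHull K (c '' Iᶜ) := by
    rw [hF]
    exact subset_convexHull K _ (Set.mem_image_of_mem a' (Finset.mem_coe.mpr ht))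
  have hvI : a' t ∈ c '' I := by
    refine mem_of_mem_convexHull_affInd haff ?_ (Set.mem_range_self t) ?_
    · rw [← hS]
      exact subset_convexHull K _
    · exact hvXY.1
  obtain ⟨κ, hκI, hκ⟩ := hvI
  have hvrange : a' t ∈ Set.range b := by
    rw [← hrange]
    exact ⟨κ, hκ⟩
  obtain ⟨j, hj⟩ := hvrange
  have hZ : ({a' t} : Set (Fin n → K)) ∈ {Z : Set (Fin n → K) | ∃ T : Finset (Fin (m + 1)),
      T.Nonempty ∧ Z = convexHull K (b '' ↑T)} :=
    ⟨{j}, ⟨j, Finset.mem_singleton_self j⟩, by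
      rw [Finset.coe_singleton, Set.image_singleton, hj, convexHull_singleton]⟩
  obtain ⟨-, hface2⟩ := hcomplex.2.2.2 _ hZ _ hY
    ⟨a' t, Set.mem_singleton _, hvXY.2⟩
  obtain ⟨m'', a'', haff2, hS2, T'', hT''ne, hF2⟩ := hface2
  obtain ⟨t2, ht2⟩ := hT''ne
  have hv2 : a'' t2 ∈ ({a' t} : Set (Fin n → K)) := by
    have h1 : a'' t2 ∈ ({a' t} : Set (Fin n → K)) ∩ convexHull K (c '' Iᶜ) := by
      rw [hF2]
      exact subset_convexHull K _ (Set.mem_image_of_mem a'' (Finset.mem_coe.mpr ht2))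
    exact h1.1
  rw [Set.mem_singleton_iff] at hv2
  have hv2' : a'' t2 ∈ c '' Iᶜ := by
    refine mem_of_mem_convexHull_affInd haff2 ?_ (Set.mem_range_self t2) ?_
    · rw [← hS2]
      exact subset_convexHull K _
    · rw [hv2]
      exact hvXY.2
  obtain ⟨κ', hκ'Ic, hκ'⟩ := hv2'
  have heq : κ = κ' := hcinj (hκ.trans (hκ'.trans hv2).symm)
  exact hκ'Ic (heq ▸ hκI)

end AuxLemmas

theorem stmt11 {R kk : Type*} [Field R] [LinearOrder R] [IsStrictOrderedRing R] [Field kk] [LinearOrder kk] [IsStrictOrderedRing kk]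
    (V : Subring R)
    (hconv : ∀ x y : R, |x| ≤ |y| → y ∈ V → x ∈ V)
    (hproper : (V : Set R) ≠ Set.univ)
    (st : R → kk)
    (hker : ∀ x ∈ V, ∀ y ∈ V, (st x = st y ↔ x - y ∈ mSet V))
    (hadd : ∀ x ∈ V, ∀ y ∈ V, st (x + y) = st x + st y)
    (hmul : ∀ x ∈ V, ∀ y ∈ V, st (x * y) = st x * st y)
    (hone : st 1 = 1)
    (hmono : ∀ x ∈ V, ∀ y ∈ V, x ≤ y → st x ≤ st y)
    (hsurj : ∀ c : kk, ∃ x ∈ V, st x = c)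
    {n m : ℕ} (a : Fin (m + 1) → (Fin n → R))
    (ha : AffineIndependent R a) (haV : ∀ j i, a j i ∈ V) :
    -- S = [a₀,…,a_m] is a V-simplex, i.e. the standard parts of its faces form a
    -- complex in kⁿ, iff some enumeration of its vertices has simplicial standard part
    (IsComplexCol {Z : Set (Fin n → kk) | ∃ T : Finset (Fin (m + 1)), T.Nonempty ∧
        Z = stSet V st (convexHull R (a '' ↑T))})
      ↔ ∃ σ : Equiv.Perm (Fin (m + 1)),
          IsSimplicialSeq (fun j => fun i => st (a (σ j) i)) := by
  classical
  have hset : {Z : Set (Fin n → kk) | ∃ T : Finset (Fin (m + 1)), T.Nonempty ∧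
      Z = stSet V st (convexHull R (a '' ↑T))}
      = {Z : Set (Fin n → kk) | ∃ T : Finset (Fin (m + 1)), T.Nonempty ∧
      Z = convexHull kk ((fun j => fun i => st (a j i)) '' ↑T)} := by
    ext Z
    simp only [Set.mem_setOf_eq]
    refine exists_congr fun T => and_congr_right fun hT => ?_
    rw [stSet_convexHull hconv hker hadd hmul hone hmono hsurj a haV T hT]
  rw [hset]
  constructor
  · intro hcomplex
    obtain ⟨k, c, hc, hrange⟩ := affInd_of_complex hcomplex
    obtain ⟨σ, hσ⟩ := exists_perm_simplicial hc hrange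
    exact ⟨σ, hσ⟩
  · rintro ⟨σ, k, ι, hsm, h0, haff, hblock⟩
    exact isComplexCol_of_affInd haff
      (range_eq_of_simplicial (b := fun j => fun i => st (a j i)) (σ := σ) h0 hblock)
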